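/- Let G be a graph of degeneracy d whose vertices are coloured with k colours (not necessarily properly), such that every colour class has more than d·(k−1) vertices. Then G contains a colourful independent set of size k, i.e., an independent set containing exactly one vertex of each colour. -/

import Mathlib

/-- Let `G` have degeneracy at most `d` and be coloured with `k` colours (surjectively but
not necessarily properly), with every colour class of size greater than `d·(k−1)`. Then `G`
has a colourful independent set of size `k`: one vertex of each colour, pairwise nonadjacent. -/
theorem stmt6 {V : Type} [Fintype V] [DecidableEq V]
    (G : SimpleGraph V) [DecidableRel G.Adj] (d k : ℕ)
    (hdeg : ∀ S : Finset V, S.Nonempty → ∃ v ∈ S, (S.filter (G.Adj v)).card ≤ d)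
    (c : V → Fin k) (hcsurj : Function.Surjective c)
    (hclass : ∀ i : Fin k, d * (k - 1) < (Finset.univ.filter (fun v => c v = i)).card) :
    ∃ g : Fin k → V, (∀ i, c (g i) = i) ∧ ∀ i j, i ≠ j → ¬ G.Adj (g i) (g j) := by
  classical
  rcases Nat.eq_zero_or_pos k with hk | hk
  · subst hk
    exact ⟨Fin.elim0, fun i => i.elim0, fun i => i.elim0⟩
  obtain ⟨v0, -⟩ := hcsurj ⟨0, hk⟩
  have key : ∀ n (I : Finset (Fin k)) (U : Finset V), I.card = n →
      (∀ w ∈ U, c w ∈ I) →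
      (∀ i ∈ I, d * (I.card - 1) < (U.filter (fun w => c w = i)).card) →
      ∃ g : Fin k → V, (∀ i ∈ I, g i ∈ U) ∧ (∀ i ∈ I, c (g i) = i) ∧
        ∀ i ∈ I, ∀ j ∈ I, i ≠ j → ¬ G.Adj (g i) (g j) := by
    intro n
    induction n with
    | zero =>
      intro I U hcard _ _
      have hIe : I = ∅ := Finset.card_eq_zero.mp hcard
      subst hIe
      exact ⟨fun _ => v0, by simp, by simp, by simp⟩
    | succ n ih =>
      intro I U hcard hUI hbig
      have hIne : I.Nonempty := Finset.card_pos.mp (by omega)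
      obtain ⟨i1, hi1⟩ := hIne
      have hUne : U.Nonempty := by
        have h1 := hbig i1 hi1
        have h2 : (U.filter (fun w => c w = i1)).Nonempty := Finset.card_pos.mp (by omega)
        obtain ⟨w, hw⟩ := h2
        exact ⟨w, (Finset.mem_filter.mp hw).1⟩
      obtain ⟨v, hvU, hvdeg⟩ := hdeg U hUne
      set i0 := c v with hi0def
      have hi0 : i0 ∈ I := hUI v hvU
      set I' := I.erase i0 with hI'
      set U' := U.filter (fun w => c w ∈ I' ∧ ¬ G.Adj v w) with hU'
      have hI'card : I'.card = n := by
        rw [hI', Finset.card_erase_of_mem hi0, hcard]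
        omega
      have hUI' : ∀ w ∈ U', c w ∈ I' := by
        intro w hw
        exact ((Finset.mem_filter.mp hw).2).1
      have hsub : ∀ i ∈ I', d * (I'.card - 1) < (U'.filter (fun w => c w = i)).card := by
        intro i hiI'
        have hne : i ≠ i0 := Finset.ne_of_mem_erase hiI'
        have hn1 : 1 ≤ n := by
          have hne' : I'.Nonempty := ⟨i, hiI'⟩
          have := Finset.card_pos.mpr hne'
          omega
        obtain ⟨m, rfl⟩ : ∃ m, n = m + 1 := ⟨n - 1, by omega⟩
        have hbigi := hbig i (Finset.mem_of_mem_erase hiI')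
        rw [hcard] at hbigi
        have hcover : U.filter (fun w => c w = i) ⊆
            U'.filter (fun w => c w = i) ∪ U.filter (G.Adj v) := by
          intro w hw
          rw [Finset.mem_filter] at hw
          by_cases hadj : G.Adj v w
          · exact Finset.mem_union_right _ (Finset.mem_filter.mpr ⟨hw.1, hadj⟩)
          · refine Finset.mem_union_left _ ?_
            have hwI' : c w ∈ I' := by rw [hw.2]; exact hiI'
            rw [hU']
            simp only [Finset.mem_filter]
            exact ⟨⟨hw.1, hwI', hadj⟩, hw.2⟩
        have h1 := Finset.card_le_card hcover
        have h2 := Finset.card_union_le (U'.filter (fun w => c w = i)) (U.filter (G.Adj v))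
        have hm1 : d * (m + 1 + 1 - 1) = d * m + d := by simp [Nat.mul_succ]
        have hm2 : d * (I'.card - 1) = d * m := by rw [hI'card]; simp
        omega
      obtain ⟨g, hgU, hgc, hgind⟩ := ih I' U' hI'card hUI' hsub
      have hU'sub : ∀ w ∈ U', w ∈ U := fun w hw => (Finset.mem_filter.mp hw).1
      have hU'nadj : ∀ w ∈ U', ¬ G.Adj v w := fun w hw => ((Finset.mem_filter.mp hw).2).2
      refine ⟨Function.update g i0 v, ?_, ?_, ?_⟩
      · intro i hi
        rcases eq_or_ne i i0 with rfl | hne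
        · simpa using hvU
        · rw [Function.update_of_ne hne]
          exact hU'sub _ (hgU i (Finset.mem_erase.mpr ⟨hne, hi⟩))
      · intro i hi
        rcases eq_or_ne i i0 with rfl | hne
        · simp [hi0def]
        · rw [Function.update_of_ne hne]
          exact hgc i (Finset.mem_erase.mpr ⟨hne, hi⟩)
      · intro i hi j hj hij
        rcases eq_or_ne i i0 with rfl | hnei
        · rw [Function.update_self, Function.update_of_ne (Ne.symm hij)]
          exact hU'nadj _ (hgU j (Finset.mem_erase.mpr ⟨Ne.symm hij, hj⟩))
        · rcases eq_or_ne j i0 with rfl | hnej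
          · rw [Function.update_self, Function.update_of_ne hnei]
            intro h
            exact hU'nadj _ (hgU i (Finset.mem_erase.mpr ⟨hnei, hi⟩)) h.symm
          · rw [Function.update_of_ne hnei, Function.update_of_ne hnej]
            exact hgind i (Finset.mem_erase.mpr ⟨hnei, hi⟩) j
              (Finset.mem_erase.mpr ⟨hnej, hj⟩) hij
  have hunivcard : (Finset.univ : Finset (Fin k)).card = k := by simp
  obtain ⟨g, _, hgc, hgind⟩ := key k Finset.univ Finset.univ hunivcard
    (fun w _ => Finset.mem_univ _)
    (by
      intro i _
      rw [hunivcard]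
      exact hclass i)
  exact ⟨g, fun i => hgc i (Finset.mem_univ i),
    fun i j hij => hgind i (Finset.mem_univ i) j (Finset.mem_univ j) hij⟩
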